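/- There exists an absolute constant C > 0 such that the following holds. Let (X,d) be a finite metric space that is the union of two subsets A and B. Let U and V be normed spaces, and suppose A embeds into U with distortion at most D_A and B embeds into V with distortion at most D_B. Let E_A ≥ 1 be such that every Lipschitz map from any subset of A into V extends to a map from all of A into V whose Lipschitz constant is at most E_A times that of the original map; let E_B ≥ 1 be the analogous constant for maps from subsets of B into U. Then X embeds into U ⊕ V ⊕ ℝ with distortion at most C·(E_A·D_B + D_A·E_B). -/

import Mathlib

open Metric

lemma l2pair_norm_le {α β : Type} [NormedAddCommGroup α] [NormedAddCommGroup β] (a : α) (b : β) :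
    ‖(WithLp.equiv 2 (α × β)).symm (a, b)‖ ≤ ‖a‖ + ‖b‖ := by
  rw [WithLp.prod_norm_eq_of_L2]
  show Real.sqrt (‖a‖ ^ 2 + ‖b‖ ^ 2) ≤ ‖a‖ + ‖b‖
  have h := Real.sqrt_le_sqrt (show ‖a‖ ^ 2 + ‖b‖ ^ 2 ≤ (‖a‖ + ‖b‖) ^ 2 by
    nlinarith [norm_nonneg a, norm_nonneg b])
  rwa [Real.sqrt_sq (by positivity)] at h

lemma l2pair_fst_le {α β : Type} [NormedAddCommGroup α] [NormedAddCommGroup β] (a : α) (b : β) :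
    ‖a‖ ≤ ‖(WithLp.equiv 2 (α × β)).symm (a, b)‖ := by
  rw [WithLp.prod_norm_eq_of_L2]
  show ‖a‖ ≤ Real.sqrt (‖a‖ ^ 2 + ‖b‖ ^ 2)
  nth_rewrite 1 [← Real.sqrt_sq (norm_nonneg a)]
  exact Real.sqrt_le_sqrt (by nlinarith [sq_nonneg ‖b‖])

lemma l2pair_snd_le {α β : Type} [NormedAddCommGroup α] [NormedAddCommGroup β] (a : α) (b : β) :
    ‖b‖ ≤ ‖(WithLp.equiv 2 (α × β)).symm (a, b)‖ := by
  rw [WithLp.prod_norm_eq_of_L2]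
  show ‖b‖ ≤ Real.sqrt (‖a‖ ^ 2 + ‖b‖ ^ 2)
  nth_rewrite 1 [← Real.sqrt_sq (norm_nonneg b)]
  exact Real.sqrt_le_sqrt (by nlinarith [sq_nonneg ‖a‖])

lemma l2pair_sub {α β : Type} [NormedAddCommGroup α] [NormedAddCommGroup β] (a c : α) (b d : β) :
    (WithLp.equiv 2 (α × β)).symm (a, b) - (WithLp.equiv 2 (α × β)).symm (c, d)
      = (WithLp.equiv 2 (α × β)).symm (a - c, b - d) := by
  rw [WithLp.equiv_symm_apply, ← WithLp.toLp_sub, Prod.mk_sub_mk]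


/-- Packing a triple into the nested `ℓ₂`-sum space. -/
noncomputable def l2pack {U V : Type} [NormedAddCommGroup U] [NormedAddCommGroup V]
    (a : U) (b : V) (c : ℝ) : WithLp 2 (U × WithLp 2 (V × ℝ)) :=
  (WithLp.equiv 2 _).symm (a, (WithLp.equiv 2 _).symm (b, c))

lemma l2pack_sub {U V : Type} [NormedAddCommGroup U] [NormedAddCommGroup V]
    (a a' : U) (b b' : V) (c c' : ℝ) :
    l2pack a b c - l2pack a' b' c' = l2pack (a - a') (b - b') (c - c') := by
  unfold l2pack
  rw [l2pair_sub, l2pair_sub]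

lemma l2pack_norm_le {U V : Type} [NormedAddCommGroup U] [NormedAddCommGroup V]
    (a : U) (b : V) (c : ℝ) : ‖l2pack a b c‖ ≤ ‖a‖ + ‖b‖ + |c| := by
  have h1 := l2pair_norm_le a ((WithLp.equiv 2 (V × ℝ)).symm (b, c))
  have h2 := l2pair_norm_le b c
  have h3 : ‖c‖ = |c| := Real.norm_eq_abs c
  unfold l2pack
  linarith

lemma l2pack_fst_le {U V : Type} [NormedAddCommGroup U] [NormedAddCommGroup V]
    (a : U) (b : V) (c : ℝ) : ‖a‖ ≤ ‖l2pack a b c‖ :=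
  l2pair_fst_le a _

lemma l2pack_snd_le {U V : Type} [NormedAddCommGroup U] [NormedAddCommGroup V]
    (a : U) (b : V) (c : ℝ) : ‖b‖ ≤ ‖l2pack a b c‖ :=
  le_trans (l2pair_fst_le b c) (l2pair_snd_le a _)

lemma l2pack_trd_le {U V : Type} [NormedAddCommGroup U] [NormedAddCommGroup V]
    (a : U) (b : V) (c : ℝ) : |c| ≤ ‖l2pack a b c‖ := by
  have h1 : ‖c‖ ≤ ‖(WithLp.equiv 2 (V × ℝ)).symm (b, c)‖ := l2pair_snd_le b c
  have h2 := l2pair_snd_le a ((WithLp.equiv 2 (V × ℝ)).symm (b, c))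
  rw [Real.norm_eq_abs] at h1
  exact le_trans h1 h2

/-- One-sided construction: a globally Lipschitz map `u` agreeing with `ψ` on `A`,
which moreover almost-preserves distances from points of `A` to points of `B`. -/
lemma sideMap {X : Type} [MetricSpace X] [Finite X] (A B : Set X) (hAB : A ∪ B = Set.univ)
    {U : Type} [NormedAddCommGroup U]
    (ψ : X → U) (D E : ℝ) (hD : 1 ≤ D) (hE : 1 ≤ E)
    (hψ : ∀ x ∈ A, ∀ y ∈ A, dist x y ≤ ‖ψ x - ψ y‖ ∧ ‖ψ x - ψ y‖ ≤ D * dist x y)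
    (hext : ∀ S : Set X, S ⊆ B → ∀ (g : X → U) (K : ℝ), 0 ≤ K →
        (∀ x ∈ S, ∀ y ∈ S, ‖g x - g y‖ ≤ K * dist x y) →
        ∃ g' : X → U, (∀ x ∈ S, g' x = g x) ∧
          ∀ x ∈ B, ∀ y ∈ B, ‖g' x - g' y‖ ≤ E * K * dist x y)
    (hA : A.Nonempty) :
    ∃ u : X → U,
      (∀ x ∈ A, u x = ψ x) ∧
      (∀ x y : X, ‖u x - u y‖ ≤ 11 * (E * D) * dist x y) ∧
      (∀ x ∈ A, ∀ y ∈ B, dist x y ≤ ‖u x - u y‖ + 10 * (E * D) * infDist y A) := by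
  classical
  have hD0 : (0:ℝ) < D := lt_of_lt_of_le one_pos hD
  have hK1 : (1:ℝ) ≤ E * D := le_trans hD (le_mul_of_one_le_left (le_of_lt hD0) hE)
  have hK0 : (0:ℝ) ≤ E * D := le_trans zero_le_one hK1
  set K : ℝ := E * D with hKdef
  -- nearest point projection onto A
  have hproj : ∀ x : X, ∃ a ∈ A, infDist x A = dist x a := fun x =>
    (A.toFinite.isCompact).exists_infDist_eq_dist hA x
  choose α hαA hαd using hproj
  have hαx : ∀ x ∈ A, α x = x := by
    intro x hx
    have h0 : infDist x A = 0 := infDist_zero_of_mem hx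
    have := (hαd x).symm.trans h0
    exact (dist_eq_zero.mp this).symm
  -- maximal relative net T inside B
  haveI : Fintype X := Fintype.ofFinite X
  have hPempty : ↑(∅ : Finset X) ⊆ B ∧
      ∀ s ∈ (∅ : Finset X), ∀ t ∈ (∅ : Finset X), s ≠ t → infDist s A ≤ 2 * dist s t := by
    constructor <;> simp
  obtain ⟨T, hT, hTmax⟩ := Finset.exists_max_image
    (Finset.univ.filter (fun T : Finset X => ↑T ⊆ B ∧
      ∀ s ∈ T, ∀ t ∈ T, s ≠ t → infDist s A ≤ 2 * dist s t)) Finset.card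
    ⟨∅, Finset.mem_filter.mpr ⟨Finset.mem_univ _, hPempty⟩⟩
  obtain ⟨hTB, hTsep⟩ := (Finset.mem_filter.mp hT).2
  -- covering: every point of B has a T-point within its distance to A
  have hcov : ∀ y ∈ B, ∃ p ∈ T, dist y p ≤ infDist y A := by
    intro y hy
    by_cases hyT : y ∈ T
    · exact ⟨y, hyT, by simp [infDist_nonneg]⟩
    · have hsubB : ↑(insert y T) ⊆ B := by
        intro z hz
        rcases Finset.mem_insert.mp hz with h | h
        · exact h ▸ hy
        · exact hTB h
      have hviol : ∃ s ∈ insert y T, ∃ t ∈ insert y T, s ≠ t ∧ 2 * dist s t < infDist s A := by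
        by_contra hc
        push_neg at hc
        have hmem : insert y T ∈ Finset.univ.filter (fun T : Finset X => ↑T ⊆ B ∧
            ∀ s ∈ T, ∀ t ∈ T, s ≠ t → infDist s A ≤ 2 * dist s t) :=
          Finset.mem_filter.mpr ⟨Finset.mem_univ _, hsubB, fun s hs t ht hst => hc s hs t ht hst⟩
        have hcard := hTmax _ hmem
        rw [Finset.card_insert_of_notMem hyT] at hcard
        omega
      obtain ⟨s, hs, t, ht, hst, hlt⟩ := hviol
      rcases Finset.mem_insert.mp hs with hsy | hsT
      · rcases Finset.mem_insert.mp ht with hty | htT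
        · exact absurd (hsy.trans hty.symm) hst
        · refine ⟨t, htT, ?_⟩
          rw [hsy] at hlt
          have h0 : (0:ℝ) ≤ dist y t := dist_nonneg
          linarith
      · rcases Finset.mem_insert.mp ht with hty | htT
        · rw [hty] at hlt
          refine ⟨s, hsT, ?_⟩
          have h2 : infDist s A ≤ infDist y A + dist s y := infDist_le_infDist_add_dist
          have h0 : (0:ℝ) ≤ dist s y := dist_nonneg
          rw [dist_comm]
          linarith
        · exact absurd (hTsep s hsT t htT hst) (not_le.mpr hlt)
  -- Lipschitz bound for ψ ∘ α on the net T
  have hDK : D ≤ K := le_mul_of_one_le_left hD0.le hE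
  have hLipT : ∀ x ∈ (↑T : Set X), ∀ y ∈ (↑T : Set X),
      ‖ψ (α x) - ψ (α y)‖ ≤ (5 * D) * dist x y := by
    intro s hsT t htT
    by_cases hst : s = t
    · subst hst; simp
    · have hsT' : s ∈ T := Finset.mem_coe.mp hsT
      have htT' : t ∈ T := Finset.mem_coe.mp htT
      have h1 : ‖ψ (α s) - ψ (α t)‖ ≤ D * dist (α s) (α t) := (hψ _ (hαA s) _ (hαA t)).2
      have h4 : dist (α s) (α t) ≤ dist (α s) s + dist s t + dist t (α t) := dist_triangle4 _ _ _ _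
      have hs2 : infDist s A ≤ 2 * dist s t := hTsep s hsT' t htT' hst
      have ht2 : infDist t A ≤ 2 * dist t s := hTsep t htT' s hsT' (Ne.symm hst)
      have hds : dist (α s) s = infDist s A := by rw [dist_comm, ← hαd]
      have hdt : dist t (α t) = infDist t A := (hαd t).symm
      have hcomm : dist t s = dist s t := dist_comm t s
      nlinarith [dist_nonneg (x := s) (y := t), mul_le_mul_of_nonneg_left h4 hD0.le]
  obtain ⟨g', hg'T, hg'L⟩ := hext ↑T hTB (fun z => ψ (α z)) (5 * D) (by positivity) hLipT
  set u : X → U := fun z => if z ∈ A then ψ z else g' z with hu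
  have huA : ∀ x ∈ A, u x = ψ x := fun x hx => if_pos hx
  have hu2 : ∀ y ∈ B, ‖u y - ψ (α y)‖ ≤ 9 * K * infDist y A := by
    intro y hy
    by_cases hyA : y ∈ A
    · rw [huA y hyA, hαx y hyA, sub_self, norm_zero]
      have := infDist_nonneg (s := A) (x := y)
      positivity
    · obtain ⟨p, hpT, hpd⟩ := hcov y hy
      have hyu : u y = g' y := if_neg hyA
      have hpB : p ∈ B := hTB (Finset.mem_coe.mpr hpT)
      have h1 : ‖g' y - g' p‖ ≤ E * (5 * D) * dist y p := hg'L y hy p hpB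
      have h2 : g' p = ψ (α p) := hg'T p (Finset.mem_coe.mpr hpT)
      have h3 : ‖ψ (α p) - ψ (α y)‖ ≤ D * dist (α p) (α y) := (hψ _ (hαA p) _ (hαA y)).2
      have h4 : dist (α p) (α y) ≤ dist (α p) p + dist p y + dist y (α y) := dist_triangle4 _ _ _ _
      have h5 : infDist p A ≤ infDist y A + dist p y := infDist_le_infDist_add_dist
      have h6 : dist p y = dist y p := dist_comm p y
      have h7 : dist (α p) p = infDist p A := by rw [dist_comm, ← hαd]
      have h8 : dist y (α y) = infDist y A := (hαd y).symm
      have htri : ‖g' y - ψ (α y)‖ ≤ ‖g' y - g' p‖ + ‖g' p - ψ (α y)‖ :=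
        norm_sub_le_norm_sub_add_norm_sub _ _ _
      rw [h2] at htri h1
      rw [hyu]
      have hi0 : (0 : ℝ) ≤ infDist y A := infDist_nonneg
      have hd0 : (0 : ℝ) ≤ dist y p := dist_nonneg
      have hb1 : ‖g' y - ψ (α p)‖ ≤ 5 * K * infDist y A := by nlinarith
      have hb2 : ‖ψ (α p) - ψ (α y)‖ ≤ 4 * D * infDist y A := by nlinarith
      have hb3 : 4 * D * infDist y A ≤ 4 * K * infDist y A := by nlinarith
      linarith
  have huL : ∀ x y : X, ‖u x - u y‖ ≤ 11 * K * dist x y := by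
    have key : ∀ x ∈ A, ∀ (y : X), y ∉ A → ‖u x - u y‖ ≤ 11 * K * dist x y := by
      intro x hx y hyA
      have hyB : y ∈ B := by
        have hy : y ∈ A ∪ B := hAB ▸ Set.mem_univ y
        rcases hy with h | h
        · exact absurd h hyA
        · exact h
      have h2 := hu2 y hyB
      have h3 : ‖ψ x - ψ (α y)‖ ≤ D * dist x (α y) := (hψ x hx _ (hαA y)).2
      have h4 : dist x (α y) ≤ dist x y + dist y (α y) := dist_triangle _ _ _
      have h5 : infDist y A ≤ dist y x := infDist_le_dist_of_mem hx
      have h8 : dist y (α y) = infDist y A := (hαd y).symm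
      have h6 : dist y x = dist x y := dist_comm y x
      have htri : ‖u x - u y‖ ≤ ‖ψ x - ψ (α y)‖ + ‖ψ (α y) - u y‖ := by
        rw [huA x hx]
        exact norm_sub_le_norm_sub_add_norm_sub _ _ _
      have h9 : ‖ψ (α y) - u y‖ = ‖u y - ψ (α y)‖ := norm_sub_rev _ _
      have hd0 : (0 : ℝ) ≤ dist x y := dist_nonneg
      have hi0 : (0 : ℝ) ≤ infDist y A := infDist_nonneg
      nlinarith [mul_le_mul_of_nonneg_left h4 hD0.le]
    intro x y
    by_cases hx : x ∈ A <;> by_cases hy : y ∈ A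
    · rw [huA x hx, huA y hy]
      have := (hψ x hx y hy).2
      have hd0 : (0 : ℝ) ≤ dist x y := dist_nonneg
      nlinarith
    · exact key x hx y hy
    · rw [norm_sub_rev, dist_comm]; exact key y hy x hx
    · have hxB : x ∈ B := by
        have h : x ∈ A ∪ B := hAB ▸ Set.mem_univ x
        rcases h with h | h
        · exact absurd h hx
        · exact h
      have hyB : y ∈ B := by
        have h : y ∈ A ∪ B := hAB ▸ Set.mem_univ y
        rcases h with h | h
        · exact absurd h hy
        · exact h
      have hxu : u x = g' x := if_neg hx
      have hyu : u y = g' y := if_neg hy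
      rw [hxu, hyu]
      have := hg'L x hxB y hyB
      have hd0 : (0 : ℝ) ≤ dist x y := dist_nonneg
      nlinarith
  have huC : ∀ x ∈ A, ∀ y ∈ B, dist x y ≤ ‖u x - u y‖ + 10 * K * infDist y A := by
    intro x hx y hy
    have h0 : dist x y ≤ dist x (α y) + dist (α y) y := dist_triangle _ _ _
    have h1 : dist x (α y) ≤ ‖ψ x - ψ (α y)‖ := (hψ x hx _ (hαA y)).1
    have htri : ‖ψ x - ψ (α y)‖ ≤ ‖ψ x - u y‖ + ‖u y - ψ (α y)‖ :=
      norm_sub_le_norm_sub_add_norm_sub _ _ _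
    have h2 := hu2 y hy
    have h8 : dist (α y) y = infDist y A := by rw [dist_comm, ← hαd]
    have hux : ψ x = u x := (huA x hx).symm
    rw [hux] at htri h1
    have hi0 : (0 : ℝ) ≤ infDist y A := infDist_nonneg
    nlinarith [mul_le_mul_of_nonneg_right hK1 hi0]
  exact ⟨u, huA, huL, huC⟩

lemma coefIneq (KA KB i1 i2 : ℝ) (h1 : 0 ≤ KA) (h2 : 0 ≤ KB) (hi1 : 0 ≤ i1) (hi2 : 0 ≤ i2) :
    10 * KB * i1 ≤ (1/4) * (40 * (KA + KB) * (i1 + i2)) := by nlinarith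

lemma normalizeEmb {X U : Type} [MetricSpace X] [NormedAddCommGroup U] [NormedSpace ℝ U]
    (A : Set X) (φ : X → U) (cA D : ℝ) (hc : 0 < cA)
    (h : ∀ x ∈ A, ∀ y ∈ A, cA * dist x y ≤ ‖φ x - φ y‖ ∧ ‖φ x - φ y‖ ≤ cA * D * dist x y) :
    ∀ x ∈ A, ∀ y ∈ A, dist x y ≤ ‖cA⁻¹ • φ x - cA⁻¹ • φ y‖ ∧
      ‖cA⁻¹ • φ x - cA⁻¹ • φ y‖ ≤ D * dist x y := by
  intro x hx y hy
  obtain ⟨h1, h2⟩ := h x hx y hy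
  have hn : ‖cA⁻¹ • φ x - cA⁻¹ • φ y‖ = cA⁻¹ * ‖φ x - φ y‖ := by
    rw [← smul_sub, norm_smul, Real.norm_eq_abs, abs_of_pos (inv_pos.mpr hc)]
  rw [hn]
  constructor
  · have := mul_le_mul_of_nonneg_left h1 (inv_pos.mpr hc).le
    rwa [← mul_assoc, inv_mul_cancel₀ hc.ne', one_mul] at this
  · have := mul_le_mul_of_nonneg_left h2 (inv_pos.mpr hc).le
    rw [show cA⁻¹ * (cA * D * dist x y) = D * dist x y by field_simp] at this
    exact this


set_option maxHeartbeats 1000000 in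
/-- Union theorem for arbitrary normed spaces: there is an absolute constant
`C > 0` such that if a finite metric space `X = A ∪ B` embeds into normed
spaces `U`, `V` with distortions `D_A`, `D_B`, and the Lipschitz extension
constants for maps from subsets of `A` into `V` and from subsets of `B` into
`U` are at most `E_A`, `E_B` respectively, then `X` embeds into `U ⊕ V ⊕ ℝ`
(with the `ℓ₂`-sum norm) with distortion at most `C·(E_A·D_B + D_A·E_B)`. -/
theorem union_embeds_into_normed_spaces :
    ∃ C : ℝ, 0 < C ∧
      ∀ (X : Type) [MetricSpace X] [Finite X] (A B : Set X),
        A ∪ B = Set.univ →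
      ∀ (U : Type) [NormedAddCommGroup U] [NormedSpace ℝ U]
        (V : Type) [NormedAddCommGroup V] [NormedSpace ℝ V]
        (DA DB EA EB : ℝ), 1 ≤ DA → 1 ≤ DB → 1 ≤ EA → 1 ≤ EB →
      -- `A` embeds into `U` with distortion at most `D_A`
      (∃ (φA : X → U) (cA : ℝ), 0 < cA ∧ ∀ x ∈ A, ∀ y ∈ A,
        cA * dist x y ≤ ‖φA x - φA y‖ ∧ ‖φA x - φA y‖ ≤ cA * DA * dist x y) →
      -- `B` embeds into `V` with distortion at most `D_B`
      (∃ (φB : X → V) (cB : ℝ), 0 < cB ∧ ∀ x ∈ B, ∀ y ∈ B,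
        cB * dist x y ≤ ‖φB x - φB y‖ ∧ ‖φB x - φB y‖ ≤ cB * DB * dist x y) →
      -- Lipschitz maps from subsets of `A` into `V` extend to `A`, losing a factor `E_A`
      (∀ S : Set X, S ⊆ A → ∀ (g : X → V) (K : ℝ), 0 ≤ K →
        (∀ x ∈ S, ∀ y ∈ S, ‖g x - g y‖ ≤ K * dist x y) →
        ∃ g' : X → V, (∀ x ∈ S, g' x = g x) ∧
          ∀ x ∈ A, ∀ y ∈ A, ‖g' x - g' y‖ ≤ EA * K * dist x y) →
      -- Lipschitz maps from subsets of `B` into `U` extend to `B`, losing a factor `E_B`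
      (∀ S : Set X, S ⊆ B → ∀ (g : X → U) (K : ℝ), 0 ≤ K →
        (∀ x ∈ S, ∀ y ∈ S, ‖g x - g y‖ ≤ K * dist x y) →
        ∃ g' : X → U, (∀ x ∈ S, g' x = g x) ∧
          ∀ x ∈ B, ∀ y ∈ B, ‖g' x - g' y‖ ≤ EB * K * dist x y) →
      ∃ (Ψ : X → WithLp 2 (U × WithLp 2 (V × ℝ))) (c : ℝ), 0 < c ∧
        ∀ x y : X, c * dist x y ≤ ‖Ψ x - Ψ y‖ ∧
          ‖Ψ x - Ψ y‖ ≤ c * (C * (EA * DB + DA * EB)) * dist x y := by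
  refine ⟨122, by norm_num, ?_⟩
  intro X _ _ A B hAB U _ _ V _ _ DA DB EA EB hDA hDB hEA hEB hEmbA hEmbB hExtA hExtB
  obtain ⟨φA, cA, hcA, hφA⟩ := hEmbA
  obtain ⟨φB, cB, hcB, hφB⟩ := hEmbB
  have hψA := normalizeEmb A φA cA DA hcA hφA
  have hψB := normalizeEmb B φB cB DB hcB hφB
  set ψA : X → U := fun x => cA⁻¹ • φA x with hψAdef
  set ψB : X → V := fun x => cB⁻¹ • φB x with hψBdef
  -- the key coefficient facts
  have hKA1 : (1:ℝ) ≤ EA * DB := by nlinarith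
  have hKB1 : (1:ℝ) ≤ EB * DA := by nlinarith
  rcases Set.eq_empty_or_nonempty A with hAe | hAne
  · -- A is empty, so B = univ
    have hBall : ∀ x : X, x ∈ B := by
      intro x
      have hx : x ∈ A ∪ B := hAB ▸ Set.mem_univ x
      rcases hx with h | h
      · exact absurd h (by rw [hAe]; exact Set.notMem_empty x)
      · exact h
    refine ⟨fun x => l2pack 0 (ψB x) 0, 3/4, by norm_num, ?_⟩
    intro x y
    have hsub : l2pack (0:U) (ψB x) (0:ℝ) - l2pack 0 (ψB y) 0
        = l2pack (0 - 0) (ψB x - ψB y) (0 - 0) := l2pack_sub _ _ _ _ _ _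
    rw [hsub]
    obtain ⟨hlow, hup⟩ := hψB x (hBall x) y (hBall y)
    have h1 := l2pack_snd_le (0 - 0 : U) (ψB x - ψB y) (0 - 0 : ℝ)
    have h2 := l2pack_norm_le (0 - 0 : U) (ψB x - ψB y) (0 - 0 : ℝ)
    simp only [sub_zero, norm_zero, abs_zero] at h1 h2 ⊢
    have hd0 : (0:ℝ) ≤ dist x y := dist_nonneg
    constructor
    · linarith
    · nlinarith
  rcases Set.eq_empty_or_nonempty B with hBe | hBne
  · -- B is empty, so A = univ
    have hAall : ∀ x : X, x ∈ A := by
      intro x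
      have hx : x ∈ A ∪ B := hAB ▸ Set.mem_univ x
      rcases hx with h | h
      · exact h
      · exact absurd h (by rw [hBe]; exact Set.notMem_empty x)
    refine ⟨fun x => l2pack (ψA x) 0 0, 3/4, by norm_num, ?_⟩
    intro x y
    have hsub : l2pack (ψA x) (0:V) (0:ℝ) - l2pack (ψA y) 0 0
        = l2pack (ψA x - ψA y) (0 - 0) (0 - 0) := l2pack_sub _ _ _ _ _ _
    rw [hsub]
    obtain ⟨hlow, hup⟩ := hψA x (hAall x) y (hAall y)
    have h1 := l2pack_fst_le (ψA x - ψA y) (0 - 0 : V) (0 - 0 : ℝ)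
    have h2 := l2pack_norm_le (ψA x - ψA y) (0 - 0 : V) (0 - 0 : ℝ)
    simp only [sub_zero, norm_zero, abs_zero] at h1 h2 ⊢
    have hd0 : (0:ℝ) ≤ dist x y := dist_nonneg
    constructor
    · linarith
    · nlinarith
  -- main case : both nonempty
  have hBAuniv : B ∪ A = Set.univ := by rw [Set.union_comm]; exact hAB
  obtain ⟨u, huA, huL, huC⟩ := sideMap A B hAB ψA DA EB hDA hEB hψA hExtB hAne
  obtain ⟨v, hvB, hvL, hvC⟩ := sideMap B A hBAuniv ψB DB EA hDB hEA hψB hExtA hBne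
  set KA : ℝ := EA * DB with hKAdef
  set KB : ℝ := EB * DA with hKBdef
  set M : ℝ := 40 * (KA + KB) with hMdef
  have hM0 : (0:ℝ) < M := by rw [hMdef]; nlinarith
  set w : X → ℝ := fun x => M * (Metric.infDist x A - Metric.infDist x B) with hwdef
  have hwL : ∀ x y : X, |w x - w y| ≤ 2 * M * dist x y := by
    intro x y
    have hA1 : Metric.infDist x A ≤ Metric.infDist y A + dist x y :=
      Metric.infDist_le_infDist_add_dist
    have hA2 : Metric.infDist y A ≤ Metric.infDist x A + dist y x :=
      Metric.infDist_le_infDist_add_dist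
    have hB1 : Metric.infDist x B ≤ Metric.infDist y B + dist x y :=
      Metric.infDist_le_infDist_add_dist
    have hB2 : Metric.infDist y B ≤ Metric.infDist x B + dist y x :=
      Metric.infDist_le_infDist_add_dist
    rw [dist_comm y x] at hA2 hB2
    have h : w x - w y = M * ((Metric.infDist x A - Metric.infDist y A)
        - (Metric.infDist x B - Metric.infDist y B)) := by rw [hwdef]; ring
    rw [h, abs_mul, abs_of_pos hM0]
    have habs : |(Metric.infDist x A - Metric.infDist y A)
        - (Metric.infDist x B - Metric.infDist y B)| ≤ 2 * dist x y := by
      rw [abs_le]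
      constructor <;> linarith
    nlinarith
  refine ⟨fun x => l2pack (u x) (v x) (w x), 3/4, by norm_num, ?_⟩
  intro x y
  have hsub : l2pack (u x) (v x) (w x) - l2pack (u y) (v y) (w y)
      = l2pack (u x - u y) (v x - v y) (w x - w y) := l2pack_sub _ _ _ _ _ _
  rw [hsub]
  have hfst := l2pack_fst_le (u x - u y) (v x - v y) (w x - w y)
  have hsnd := l2pack_snd_le (u x - u y) (v x - v y) (w x - w y)
  have htrd := l2pack_trd_le (u x - u y) (v x - v y) (w x - w y)
  have hall := l2pack_norm_le (u x - u y) (v x - v y) (w x - w y)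
  have hd0 : (0:ℝ) ≤ dist x y := dist_nonneg
  constructor
  · -- lower bound
    have hi1A : (0:ℝ) ≤ Metric.infDist y A := Metric.infDist_nonneg
    have hi2B : (0:ℝ) ≤ Metric.infDist x B := Metric.infDist_nonneg
    have hi1B : (0:ℝ) ≤ Metric.infDist y B := Metric.infDist_nonneg
    have hi2A : (0:ℝ) ≤ Metric.infDist x A := Metric.infDist_nonneg
    have hKA0 : (0:ℝ) ≤ KA := by linarith
    have hKB0 : (0:ℝ) ≤ KB := by linarith
    by_cases hxA : x ∈ A
    · by_cases hyA : y ∈ A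
      · -- both in A : use u
        have h' : dist x y ≤ ‖u x - u y‖ := by
          rw [huA x hxA, huA y hyA]; exact (hψA x hxA y hyA).1
        linarith
      · have hyB : y ∈ B := by
          have hy : y ∈ A ∪ B := hAB ▸ Set.mem_univ y
          rcases hy with h | h
          · exact absurd h hyA
          · exact h
        by_cases hxB : x ∈ B
        · -- both in B : use v
          have h' : dist x y ≤ ‖v x - v y‖ := by
            rw [hvB x hxB, hvB y hyB]; exact (hψB x hxB y hyB).1
          linarith
        · -- cross : x ∈ A \ B, y ∈ B \ A
          have hwx : Metric.infDist x A = 0 := Metric.infDist_zero_of_mem hxA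
          have hwy : Metric.infDist y B = 0 := Metric.infDist_zero_of_mem hyB
          have hwxv : w x = -(M * Metric.infDist x B) := by
            simp only [hwdef]; rw [hwx]; ring
          have hwyv : w y = M * Metric.infDist y A := by
            simp only [hwdef]; rw [hwy]; ring
          have habs : |w x - w y| = M * (Metric.infDist y A + Metric.infDist x B) := by
            have h : w x - w y = -(M * (Metric.infDist y A + Metric.infDist x B)) := by
              rw [hwxv, hwyv]; ring
            rw [h, abs_neg, abs_of_nonneg (mul_nonneg hM0.le (by linarith))]
          by_cases hbig : dist x y ≤ M * (Metric.infDist y A + Metric.infDist x B)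
          · rw [habs] at htrd
            linarith
          · push_neg at hbig
            have hC := huC x hxA y hyB
            have hs : 10 * KB * Metric.infDist y A
                ≤ (1/4) * (M * (Metric.infDist y A + Metric.infDist x B)) := by
              rw [hMdef]
              exact coefIneq KA KB _ _ hKA0 hKB0 hi1A hi2B
            linarith
    · have hxB : x ∈ B := by
        have hx : x ∈ A ∪ B := hAB ▸ Set.mem_univ x
        rcases hx with h | h
        · exact absurd h hxA
        · exact h
      by_cases hyB : y ∈ B
      · -- both in B : use v
        have h' : dist x y ≤ ‖v x - v y‖ := by
          rw [hvB x hxB, hvB y hyB]; exact (hψB x hxB y hyB).1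
        linarith
      · have hyA : y ∈ A := by
          have hy : y ∈ A ∪ B := hAB ▸ Set.mem_univ y
          rcases hy with h | h
          · exact h
          · exact absurd h hyB
        -- cross : x ∈ B \ A, y ∈ A \ B
        have hwx : Metric.infDist x B = 0 := Metric.infDist_zero_of_mem hxB
        have hwy : Metric.infDist y A = 0 := Metric.infDist_zero_of_mem hyA
        have hwxv : w x = M * Metric.infDist x A := by
          simp only [hwdef]; rw [hwx]; ring
        have hwyv : w y = -(M * Metric.infDist y B) := by
          simp only [hwdef]; rw [hwy]; ring
        have habs : |w x - w y| = M * (Metric.infDist y B + Metric.infDist x A) := by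
          have h : w x - w y = M * (Metric.infDist y B + Metric.infDist x A) := by
            rw [hwxv, hwyv]; ring
          rw [h, abs_of_nonneg (mul_nonneg hM0.le (by linarith))]
        by_cases hbig : dist x y ≤ M * (Metric.infDist y B + Metric.infDist x A)
        · rw [habs] at htrd
          linarith
        · push_neg at hbig
          have hC := hvC x hxB y hyA
          have hs : 10 * KA * Metric.infDist y B
              ≤ (1/4) * (M * (Metric.infDist y B + Metric.infDist x A)) := by
            rw [hMdef, show KA + KB = KB + KA from add_comm _ _]
            exact coefIneq KB KA _ _ hKB0 hKA0 hi1B hi2A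
          linarith
  · -- upper bound
    have h1 := huL x y
    have h2 := hvL x y
    have h3 := hwL x y
    have hcoef : EA * DB + DA * EB = KA + KB := by rw [hKAdef, hKBdef]; ring
    rw [hcoef]
    have hMd : 2 * M * dist x y = 80 * (KA * dist x y) + 80 * (KB * dist x y) := by
      rw [hMdef]; ring
    have htarget : 3 / 4 * (122 * (KA + KB)) * dist x y
        = 91.5 * (KA * dist x y) + 91.5 * (KB * dist x y) := by ring
    have hKAd : 0 ≤ KA * dist x y := mul_nonneg (by linarith) hd0
    have hKBd : 0 ≤ KB * dist x y := mul_nonneg (by linarith) hd0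
    linarith
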